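/- Let (Γ,μ) be a weighted graph satisfying (p0) and (VD), and let F∈W0 be such that the diagonal upper estimate DUE(F) holds. Then there is a c>0 such that for all x∈Γ and R>0, λ(x,R) ≥ c/F(x,R). -/

import Mathlib

open scoped Classical BigOperators

noncomputable section

/-- A weighted graph: a countable infinite connected graph with symmetric
positive edge weights on edges. -/
structure WGraph (Γ : Type*) where
  adj : Γ → Γ → Prop
  adj_symm : ∀ x y, adj x y → adj y x
  w : Γ → Γ → ℝ
  w_symm : ∀ x y, w x y = w y x
  w_pos : ∀ x y, adj x y → 0 < w x y
  w_zero : ∀ x y, ¬ adj x y → w x y = 0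
  connected : ∀ x y, Relation.ReflTransGen adj x y
  inf : Infinite Γ
  cnt : Countable Γ

namespace WGraph

variable {Γ : Type*}

/-- n-fold adjacency: there is a path of length n. -/
def adjN (G : WGraph Γ) : ℕ → Γ → Γ → Prop
  | 0 => fun x y => x = y
  | (n+1) => fun x y => ∃ z, G.adj x z ∧ adjN G n z y

variable (G : WGraph Γ)

/-- μ(x) = Σ_{y} μ_{x,y}. -/
def vtx (x : Γ) : ℝ := ∑' y, G.w x y

/-- μ(A) for a set of vertices. -/
def setVol (A : Set Γ) : ℝ := ∑' y : A, G.vtx y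

/-- graph (shortest path) distance. -/
def dist (x y : Γ) : ℕ := sInf {n | G.adjN n x y}

/-- open metric ball B(x,r). -/
def ball (x : Γ) (r : ℝ) : Set Γ := {y | (G.dist x y : ℝ) < r}

/-- V(x,r) = μ(B(x,r)). -/
def vol (x : Γ) (r : ℝ) : ℝ := G.setVol (G.ball x r)

/-- one-step transition probability P(x,y) = μ_{xy}/μ(x). -/
def kerP (x y : Γ) : ℝ := G.w x y / G.vtx x

/-- n-step transition probability of the walk killed outside A. -/
def killedP (G : WGraph Γ) (A : Set Γ) : ℕ → Γ → Γ → ℝ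
  | 0 => fun x y => if x = y ∧ x ∈ A then 1 else 0
  | (n+1) => fun x y => if x ∈ A then ∑' z, G.kerP x z * killedP G A n z y else 0

/-- P_n(x,y). -/
def transP (n : ℕ) (x y : Γ) : ℝ := G.killedP Set.univ n x y

/-- heat kernel p_n(x,y) = P_n(x,y)/μ(y). -/
def hk (n : ℕ) (x y : Γ) : ℝ := G.transP n x y / G.vtx y

/-- p̃_n = p_n + p_{n+1}. -/
def hkt (n : ℕ) (x y : Γ) : ℝ := G.hk n x y + G.hk (n+1) x y

/-- Dirichlet heat kernel p_n^A. -/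
def hkA (A : Set Γ) (n : ℕ) (x y : Γ) : ℝ := G.killedP A n x y / G.vtx y

/-- p̃_n^A = p_n^A + p_{n+1}^A. -/
def hktA (A : Set Γ) (n : ℕ) (x y : Γ) : ℝ := G.hkA A n x y + G.hkA A (n+1) x y

/-- local Green function G^A(x,y) = Σ_k P_k^A(x,y). -/
def greenF (A : Set Γ) (x y : Γ) : ℝ := ∑' n, G.killedP A n x y

/-- local Green kernel g^A(x,y) = G^A(x,y)/μ(y). -/
def greenK (A : Set Γ) (x y : Γ) : ℝ := G.greenF A x y / G.vtx y

/-- mean exit time E_x(A) = Σ_{y∈A} G^A(x,y). -/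
def exitE (A : Set Γ) (x : Γ) : ℝ := ∑' y : A, G.greenF A x y

/-- E(x,r) = E_x(B(x,r)). -/
def meanE (x : Γ) (r : ℝ) : ℝ := G.exitE (G.ball x r) x

/-- the mean exit time as a function Γ × ℕ → ℝ. -/
def EF : Γ → ℕ → ℝ := fun x R => G.meanE x (R : ℝ)

/-- Ē(x,r) = max_{y ∈ B(x,r)} E_y(B(x,r)). -/
def maxE (x : Γ) (r : ℝ) : ℝ :=
  sSup {e | ∃ y ∈ G.ball x r, e = G.exitE (G.ball x r) y}

/-- Markov operator P. -/
def Pop (u : Γ → ℝ) (x : Γ) : ℝ := ∑' y, G.kerP x y * u y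

/-- Markov operator of the killed walk. -/
def PopB (B : Set Γ) (u : Γ → ℝ) (x : Γ) : ℝ :=
  ∑' y, if y ∈ B then G.kerP x y * u y else 0

/-- Dirichlet Laplacian Δ^B = P^B - I. -/
def lapB (B : Set Γ) (u : Γ → ℝ) (x : Γ) : ℝ := G.PopB B u x - u x

/-- Dirichlet form E(f,f). -/
def dform (f : Γ → ℝ) : ℝ :=
  (1/2) * ∑' p : Γ × Γ, G.w p.1 p.2 * (f p.1 - f p.2)^2

/-- effective resistance between disjoint sets. -/
def res (A B : Set Γ) : ℝ :=
  (sInf {e | ∃ f : Γ → ℝ, (∀ x ∈ A, f x = 1) ∧ (∀ x ∈ B, f x = 0) ∧ e = G.dform f})⁻¹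

/-- ρ(x,r,R), resistance of the annulus. -/
def resA (x : Γ) (r R : ℝ) : ℝ := G.res (G.ball x r) (G.ball x R)ᶜ

/-- v(x,r,R) = V(x,R) - V(x,r). -/
def volA (x : Γ) (r R : ℝ) : ℝ := G.vol x R - G.vol x r

/-- smallest Dirichlet eigenvalue λ(A) of -Δ^A. -/
def lam (A : Set Γ) : ℝ :=
  sInf {e | ∃ f : Γ → ℝ, f ≠ 0 ∧ (∀ x ∉ A, f x = 0) ∧
        e = G.dform f / (∑' x, (f x)^2 * G.vtx x)}

/-- Σ_{y∈A} v(y) μ(y). -/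
def wsum (A : Set Γ) (v : Γ → ℝ) : ℝ := ∑' y : A, v y * G.vtx y

/-- space-time sum Σ_{a ≤ i ≤ b} Σ_{y∈A} u_i(y) μ(y). -/
def stsum (A : Set Γ) (a b : ℝ) (u : ℕ → Γ → ℝ) : ℝ :=
  ∑' i : ℕ, if a ≤ (i:ℝ) ∧ (i:ℝ) ≤ b then G.wsum A (u i) else 0

/-! ### Conditions -/

/-- (p0): controlled weights. -/
def p0cond : Prop := ∃ p > (0:ℝ), ∀ x y, G.adj x y → p ≤ G.kerP x y

/-- (VD): volume doubling. -/
def VD : Prop := ∃ D > (0:ℝ), ∀ (x : Γ) (R : ℝ), 0 < R → G.vol x (2*R) ≤ D * G.vol x R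

/-- u is harmonic on A. -/
def harmOn (u : Γ → ℝ) (A : Set Γ) : Prop := ∀ x ∈ A, G.Pop u x = u x

/-- (H): elliptic Harnack inequality. -/
def EH : Prop := ∃ C > (0:ℝ), ∀ (x : Γ) (R : ℕ), 0 < R →
  ∀ u : Γ → ℝ, (∀ y, 0 ≤ u y) → G.harmOn u (G.ball x (2*(R:ℝ))) →
    ∀ y ∈ G.ball x (R:ℝ), ∀ z ∈ G.ball x (R:ℝ), u y ≤ C * u z

/-- (wTC): weak time comparison principle. -/
def wTC : Prop := ∃ C > (1:ℝ), ∀ (x y : Γ) (R : ℕ), 0 < R → G.dist x y < R →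
  G.meanE x (R:ℝ) ≤ C * G.meanE y (R:ℝ)

/-- (TC): time comparison principle. -/
def TC : Prop := ∃ C > (1:ℝ), ∀ (x y : Γ) (R : ℕ), 0 < R → G.dist x y < R →
  G.meanE x (2*(R:ℝ)) ≤ C * G.meanE y (R:ℝ)

/-- (ER): the Einstein relation E(x,2R) ≃ ρ(x,R,2R)v(x,R,2R). -/
def ER : Prop := ∃ C > (1:ℝ), ∀ (x : Γ) (R : ℕ), 0 < R →
  G.meanE x (2*(R:ℝ)) ≤ C * (G.resA x (R:ℝ) (2*(R:ℝ)) * G.volA x (R:ℝ) (2*(R:ℝ))) ∧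
  G.resA x (R:ℝ) (2*(R:ℝ)) * G.volA x (R:ℝ) (2*(R:ℝ)) ≤ C * G.meanE x (2*(R:ℝ))

/-- (aDρv): anti-doubling for the resistance-volume product. -/
def aDrv : Prop := ∃ c > (0:ℝ), ∃ b > (0:ℝ), ∀ (x : Γ) (r R : ℕ), 0 < r → r < R →
  c * ((R:ℝ)/(r:ℝ)) ^ b * (G.resA x (r:ℝ) (2*(r:ℝ)) * G.volA x (r:ℝ) (2*(r:ℝ)))
    ≤ G.resA x (R:ℝ) (2*(R:ℝ)) * G.volA x (R:ℝ) (2*(R:ℝ))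

/-- RLE(E): resistance lower estimate w.r.t. the mean exit time. -/
def RLE_E : Prop := ∃ c > (0:ℝ), ∀ (x : Γ) (R : ℕ), 0 < R →
  c * G.meanE x (2*(R:ℝ)) / G.vol x (2*(R:ℝ)) ≤ G.resA x (R:ℝ) (2*(R:ℝ))

/-- the two-sided regularity (w1) of a space-time scaling function,
with exponents β (upper) and β' (lower). -/
def W0reg (F : Γ → ℕ → ℝ) (β β' : ℝ) : Prop :=
  ∃ cF > (0:ℝ), ∃ CF > (0:ℝ), ∀ (x y : Γ) (R r : ℕ), 0 < r → r < R → G.dist x y < R →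
    cF * ((R:ℝ)/(r:ℝ)) ^ β' ≤ F x R / F y r ∧ F x R / F y r ≤ CF * ((R:ℝ)/(r:ℝ)) ^ β

/-- F ∈ W₀. -/
def memW0 (F : Γ → ℕ → ℝ) : Prop :=
  (∃ β > (1:ℝ), ∃ β' > (0:ℝ), G.W0reg F β β') ∧
  (∃ c > (0:ℝ), ∀ (x : Γ) (R : ℕ), c * (R:ℝ)^2 ≤ F x R) ∧
  (∀ (x : Γ) (R : ℕ), F x R + 1 ≤ F x (R+1))

/-- F ∈ W₁ (β' > 1). -/
def memW1 (F : Γ → ℕ → ℝ) : Prop :=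
  (∃ β > (1:ℝ), ∃ β' > (1:ℝ), G.W0reg F β β') ∧
  (∃ c > (0:ℝ), ∀ (x : Γ) (R : ℕ), c * (R:ℝ)^2 ≤ F x R) ∧
  (∀ (x : Γ) (R : ℕ), F x R + 1 ≤ F x (R+1))

/-- generalized inverse f(x,n) = min{R ∈ ℕ : F(x,R) ≥ n}. -/
def invF' (F : Γ → ℕ → ℝ) (x : Γ) (n : ℕ) : ℕ := sInf {R : ℕ | (n:ℝ) ≤ F x R}

/-- g(F): two-sided bound for the Green kernel on annuli. -/
def gF (F : Γ → ℕ → ℝ) : Prop :=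
  ∃ c > (0:ℝ), ∃ C > (0:ℝ), ∀ (x : Γ) (R : ℕ), 0 < R → ∀ y : Γ,
    y ∈ G.ball x (R:ℝ) → y ∉ G.ball x ((R:ℝ)/2) →
      G.greenK (G.ball x (2*(R:ℝ))) x y ≤ C * F x (2*R) / G.vol x (2*(R:ℝ)) ∧
      c * F x (2*R) / G.vol x (2*(R:ℝ)) ≤ G.greenK (G.ball x (2*(R:ℝ))) x y

/-- DUE(F): diagonal upper estimate. -/
def DUE (F : Γ → ℕ → ℝ) : Prop :=
  ∃ C > (0:ℝ), ∀ (x : Γ) (n : ℕ), 0 < n → G.hk n x x ≤ C / G.vol x (invF' F x n : ℝ)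

/-- UE(F): (sub-Gaussian) heat kernel upper estimate. -/
def UE (F : Γ → ℕ → ℝ) : Prop :=
  ∃ C > (1:ℝ), ∃ β > (1:ℝ), ∃ c > (0:ℝ), ∀ (x y : Γ) (n : ℕ), 0 < n →
    G.hk n x y ≤ C / G.vol x (invF' F x n : ℝ) *
      Real.exp (-(c * (F x (G.dist x y) / n) ^ (1/(β-1))))

/-- PLE(F): particular lower estimate for the Dirichlet heat kernel. -/
def PLE (F : Γ → ℕ → ℝ) : Prop :=
  ∃ c δ ε : ℝ, 0 < c ∧ c < 1 ∧ 0 < δ ∧ δ < 1 ∧ 0 < ε ∧ ε < 1 ∧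
    ∀ (x : Γ) (R : ℕ), 0 < R → ∀ (n : ℕ) (y : Γ),
      (n:ℝ) ≤ ε * F x R →
      (G.dist x y : ℝ) < min (n:ℝ) (δ * (invF' F x n : ℝ)) →
        c / G.vol x (invF' F x n : ℝ) ≤ G.hktA (G.ball x (R:ℝ)) n x y

/-- NDLE(F): near diagonal lower estimate. -/
def NDLE (F : Γ → ℕ → ℝ) : Prop :=
  ∃ c > (0:ℝ), ∃ δ > (0:ℝ), ∀ (x y : Γ) (n : ℕ), 0 < n →
    (G.dist x y : ℝ) < min (δ * (invF' F x n : ℝ)) (n:ℝ) →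
      c / G.vol x (invF' F x n : ℝ) ≤ G.hkt n x y

/-- LE(F): off-diagonal lower estimate. -/
def LE (F : Γ → ℕ → ℝ) : Prop :=
  ∃ C > (1:ℝ), ∃ β' > (1:ℝ), ∃ c > (0:ℝ), ∀ (x y : Γ) (n : ℕ), G.dist x y ≤ n →
    c / G.vol x (invF' F x n : ℝ) *
        Real.exp (-(C * (F x (G.dist x y) / n) ^ (1/(β'-1))))
      ≤ G.hkt n x y

/-- u is a nonnegative Dirichlet sub-solution of the heat equation
on [0,T] × B. -/
def subSolOn (B : Set Γ) (T : ℝ) (u : ℕ → Γ → ℝ) : Prop :=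
  (∀ n y, 0 ≤ u n y) ∧
  ∀ (n : ℕ) (y : Γ), y ∈ B → (n:ℝ) < T → u (n+1) y - u n y ≤ G.lapB B (u n) y

/-- u is a nonnegative Dirichlet super-solution of the heat equation
on [0,T] × B. -/
def supSolOn (B : Set Γ) (T : ℝ) (u : ℕ → Γ → ℝ) : Prop :=
  (∀ n y, 0 ≤ u n y) ∧
  ∀ (n : ℕ) (y : Γ), y ∈ B → (n:ℝ) < T → G.lapB B (u n) y ≤ u (n+1) y - u n y

/-- PMV_δ(F) with constants c1 < c2 < c3 < c4 ≤ c5: parabolic mean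
value inequality. -/
def PMVd (F : Γ → ℕ → ℝ) (δ c1 c2 c3 c4 c5 : ℝ) : Prop :=
  ∃ C > (1:ℝ), ∀ (x : Γ) (R : ℕ), 0 < R →
    ∀ u : ℕ → Γ → ℝ, G.subSolOn (G.ball x (R:ℝ)) (c5 * F x R) u →
      ∀ (n : ℕ) (y : Γ), y ∈ G.ball x (δ * R) →
        c3 * F x R ≤ (n:ℝ) → (n:ℝ) ≤ c4 * F x R →
          u n y ≤ C / ((c2 - c1) * F x R * G.vol x (δ * R)) *
            G.stsum (G.ball x (δ * R)) (c1 * F x R) (c2 * F x R) u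

/-- PMV(F) = PMV_1(F) for all admissible constants. -/
def PMV (F : Γ → ℕ → ℝ) : Prop :=
  ∀ c1 c2 c3 c4 c5 : ℝ, 0 ≤ c1 → c1 < c2 → c2 < c3 → c3 < c4 → c4 ≤ c5 →
    G.PMVd F 1 c1 c2 c3 c4 c5

/-- PSMV(F): parabolic super mean value inequality. -/
def PSMV (F : Γ → ℕ → ℝ) : Prop :=
  ∃ ε : ℝ, 0 < ε ∧ ε < 1 ∧
    ∀ c1 c2 c3 c4 c5 : ℝ, 0 < c1 → c1 < c2 → c2 < c3 → c3 < c4 → c4 ≤ c5 →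
      c4 - c1 < ε →
      ∃ δ > (0:ℝ), ∃ c > (0:ℝ), ∀ (x : Γ) (R : ℕ), 0 < R →
        ∀ u : ℕ → Γ → ℝ, G.supSolOn (G.ball x (R:ℝ)) (c5 * F x R) u →
          ∀ (k : ℕ) (y : Γ), y ∈ G.ball x (δ * R) →
            c3 * F x R ≤ (k:ℝ) → (k:ℝ) ≤ c4 * F x R →
              c / ((c2 - c1) * F x R * G.vol x (δ * R)) *
                  G.stsum (G.ball x (δ * R)) (c1 * F x R) (c2 * F x R)
                    (fun i z => u i z + u (i+1) z)
                ≤ u k y + u (k+1) y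

/-- u solves the heat equation ∂ₙu = Δu on [a,b) × B. -/
def solOn (B : Set Γ) (a b : ℝ) (u : ℕ → Γ → ℝ) : Prop :=
  (∀ n y, 0 ≤ u n y) ∧
  ∀ (n : ℕ) (y : Γ), y ∈ B → a ≤ (n:ℝ) → (n:ℝ) < b → u (n+1) y = G.Pop (u n) y

/-- PH(F): parabolic Harnack inequality. -/
def PH (F : Γ → ℕ → ℝ) : Prop :=
  ∃ C > (0:ℝ), ∀ (x : Γ) (R k : ℕ), 0 < R →
    ∀ u : ℕ → Γ → ℝ, G.solOn (G.ball x (2*(R:ℝ))) (k:ℝ) ((k:ℝ) + F x R) u →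
      ∀ (nm np : ℕ) (xm xp : Γ), xm ∈ G.ball x (R:ℝ) → xp ∈ G.ball x (R:ℝ) →
        (k:ℝ) + F x R / 4 ≤ (nm:ℝ) → (nm:ℝ) ≤ (k:ℝ) + F x R / 2 →
        (k:ℝ) + 3 * F x R / 4 ≤ (np:ℝ) → (np:ℝ) < (k:ℝ) + F x R →
        (G.dist xm xp : ℝ) ≤ (np:ℝ) - (nm:ℝ) →
          u nm xm ≤ C * (u np xp + u (np+1) xp)

/-- (MV): elliptic mean value inequality. -/
def MV : Prop := ∃ C > (0:ℝ), ∀ (x : Γ) (R : ℕ), 0 < R →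
  ∀ u : Γ → ℝ, (∀ y, 0 ≤ u y) → G.harmOn u (G.ball x (R:ℝ)) →
    u x ≤ C / G.vol x (R:ℝ) * G.wsum (G.ball x (R:ℝ)) u

/-- the set of integers k eligible in the definition of the local
sub-Gaussian upper exponent k_x(n,R). -/
def kSet (F : Γ → ℕ → ℝ) (q : ℝ) (x : Γ) (n R : ℕ) : Set ℕ :=
  {k | 1 ≤ k ∧ ∀ y : Γ, G.dist x y < R → (n:ℝ)/(k:ℝ) ≤ q * F y (R / k)}

/-- k = k_x(n,R): the maximal eligible integer, or 1 if there is none. -/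
def isKexp (F : Γ → ℕ → ℝ) (q : ℝ) (x : Γ) (n R k : ℕ) : Prop :=
  (k ∈ G.kSet F q x n R ∧ ∀ j ∈ G.kSet F q x n R, j ≤ k) ∨
  (G.kSet F q x n R = ∅ ∧ k = 1)

/-- the set of integers l eligible in the definition of l_x(n,R). -/
def lSet' (F : Γ → ℕ → ℝ) (Cl : ℝ) (x : Γ) (n R : ℕ) : Set ℕ :=
  {l | 1 ≤ l ∧ l ≤ n ∧ Cl * F x ((R + l - 1) / l) ≤ (n:ℝ)/(l:ℝ)}

/-- l = l_x(n,R): the minimal eligible integer, or n if there is none. -/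
def isLexp (F : Γ → ℕ → ℝ) (Cl : ℝ) (x : Γ) (n R l : ℕ) : Prop :=
  (l ∈ lSet' F Cl x n R ∧ ∀ j ∈ lSet' F Cl x n R, l ≤ j) ∨
  (lSet' F Cl x n R = ∅ ∧ l = n)


-- ### auxiliary lemmas for statement13

-- ### auxiliary lemmas

lemma w_nonneg (x y : Γ) : 0 ≤ G.w x y := by
  by_cases h : G.adj x y
  · exact (G.w_pos x y h).le
  · exact (G.w_zero x y h).ge

lemma vtx_nonneg (x : Γ) : 0 ≤ G.vtx x := tsum_nonneg (fun y => G.w_nonneg x y)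

lemma exists_adj (x : Γ) : ∃ y, G.adj x y := by
  haveI := G.inf
  obtain ⟨y, hy⟩ := exists_ne x
  have h := G.connected x y
  rcases h.cases_head with h | ⟨c, hc, _⟩
  · exact absurd h.symm hy
  · exact ⟨c, hc⟩

lemma vtx_pos (hp : G.p0cond) (x : Γ) : 0 < G.vtx x := by
  rcases (G.vtx_nonneg x).lt_or_eq with h | h
  · exact h
  · exfalso
    obtain ⟨p, hp0, hker⟩ := hp
    obtain ⟨y, hy⟩ := G.exists_adj x
    have h2 := hker x y hy
    rw [kerP, ← h, div_zero] at h2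
    exact absurd (hp0.trans_le h2) (lt_irrefl 0)

lemma summable_w (hp : G.p0cond) (x : Γ) : Summable (G.w x) := by
  by_contra h
  have h2 : G.vtx x = 0 := tsum_eq_zero_of_not_summable h
  exact absurd (G.vtx_pos hp x) (by rw [h2]; exact lt_irrefl 0)

lemma w_le_vtx (hp : G.p0cond) (x y : Γ) : G.w x y ≤ G.vtx x :=
  Summable.le_tsum (G.summable_w hp x) y (fun z _ => G.w_nonneg x z)

lemma adj_w_ge (hp : G.p0cond) {p : ℝ} (hker : ∀ x y, G.adj x y → p ≤ G.kerP x y)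
    {x y : Γ} (h : G.adj x y) : p * G.vtx x ≤ G.w x y := by
  have h1 := hker x y h
  rw [kerP, le_div_iff₀ (G.vtx_pos hp x)] at h1
  exact h1

lemma adj_finite (hp : G.p0cond) (x : Γ) : {y | G.adj x y}.Finite := by
  obtain ⟨p, hp0, hker⟩ := id hp
  have hv := G.vtx_pos hp x
  have hs := G.summable_w hp x
  have h0 : Filter.Tendsto (G.w x) Filter.cofinite (nhds 0) := hs.tendsto_cofinite_zero
  have h1 : ∀ᶠ y in Filter.cofinite, G.w x y < p * G.vtx x := by
    have := h0.eventually (eventually_lt_nhds (mul_pos hp0 hv))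
    simpa using this
  rw [Filter.eventually_cofinite] at h1
  refine h1.subset ?_
  intro y hy
  simp only [Set.mem_setOf_eq, not_lt]
  exact G.adj_w_ge hp hker hy

lemma adjN_add (m n : ℕ) (x z : Γ) :
    G.adjN (m+n) x z ↔ ∃ y, G.adjN m x y ∧ G.adjN n y z := by
  induction m generalizing x with
  | zero => simp [adjN, Nat.zero_add]
  | succ m ih =>
      have : m + 1 + n = (m + n) + 1 := by omega
      rw [this]
      show (∃ a, G.adj x a ∧ G.adjN (m+n) a z) ↔ _
      constructor
      · rintro ⟨a, ha, h⟩
        obtain ⟨y, h1, h2⟩ := (ih a).1 h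
        exact ⟨y, ⟨a, ha, h1⟩, h2⟩
      · rintro ⟨y, ⟨a, ha, h1⟩, h2⟩
        exact ⟨a, ha, (ih a).2 ⟨y, h1, h2⟩⟩

lemma adjN_one (x y : Γ) : G.adjN 1 x y ↔ G.adj x y := by
  constructor
  · rintro ⟨z, hz, h⟩; cases h; exact hz
  · intro h; exact ⟨y, h, rfl⟩

lemma adjN_symm {n : ℕ} {x y : Γ} (h : G.adjN n x y) : G.adjN n y x := by
  induction n generalizing x y with
  | zero => exact h.symm
  | succ n ih =>
      obtain ⟨z, hz, h2⟩ := h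
      have : n + 1 = n + 1 := rfl
      rw [show n + 1 = n + 1 from rfl]
      refine (G.adjN_add n 1 y x).2 ⟨z, ih h2, (G.adjN_one z x).2 (G.adj_symm x z hz)⟩

lemma exists_adjN (x y : Γ) : ∃ n, G.adjN n x y := by
  have h := G.connected x y
  induction h with
  | refl => exact ⟨0, rfl⟩
  | tail _ hadj ih =>
      obtain ⟨n, hn⟩ := ih
      exact ⟨n + 1, (G.adjN_add n 1 _ _).2 ⟨_, hn, (G.adjN_one _ _).2 hadj⟩⟩

lemma dist_adjN (x y : Γ) : G.adjN (G.dist x y) x y :=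
  Nat.sInf_mem (G.exists_adjN x y)

lemma dist_le {n : ℕ} {x y : Γ} (h : G.adjN n x y) : G.dist x y ≤ n :=
  Nat.sInf_le h

lemma dist_self (x : Γ) : G.dist x x = 0 :=
  Nat.le_zero.1 (G.dist_le rfl)

lemma dist_symm (x y : Γ) : G.dist x y = G.dist y x :=
  le_antisymm (G.dist_le (G.adjN_symm (G.dist_adjN y x)))
    (G.dist_le (G.adjN_symm (G.dist_adjN x y)))

lemma dist_triangle (x y z : Γ) : G.dist x z ≤ G.dist x y + G.dist y z :=
  G.dist_le ((G.adjN_add _ _ _ _).2 ⟨y, G.dist_adjN x y, G.dist_adjN y z⟩)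

lemma eq_of_dist_eq_zero {x y : Γ} (h : G.dist x y = 0) : x = y := by
  have := G.dist_adjN x y
  rw [h] at this
  exact this

lemma dist_adj {x y : Γ} (h : G.adj x y) : G.dist x y ≤ 1 :=
  G.dist_le ((G.adjN_one x y).2 h)

lemma closedBall_finite (hp : G.p0cond) (x : Γ) (n : ℕ) :
    {y | G.dist x y ≤ n}.Finite := by
  induction n with
  | zero =>
      refine Set.Finite.subset (Set.finite_singleton x) ?_
      intro y hy
      simp only [Set.mem_setOf_eq, Nat.le_zero] at hy
      simp [(G.eq_of_dist_eq_zero hy).symm]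
  | succ n ih =>
      have hsub : {y | G.dist x y ≤ n + 1} ⊆
          {y | G.dist x y ≤ n} ∪ ⋃ z ∈ {y | G.dist x y ≤ n}, {y | G.adj z y} := by
        intro y hy
        simp only [Set.mem_setOf_eq] at hy
        by_cases h : G.dist x y ≤ n
        · exact Or.inl h
        · have hd : G.dist x y = n + 1 := by omega
          have := G.dist_adjN x y
          rw [hd, show n + 1 = n + 1 from rfl] at this
          obtain ⟨z, hz1, hz2⟩ := (G.adjN_add n 1 x y).1 this
          refine Or.inr ?_
          simp only [Set.mem_iUnion, Set.mem_setOf_eq]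
          exact ⟨z, G.dist_le hz1, (G.adjN_one z y).1 hz2⟩
      exact Set.Finite.subset (ih.union (ih.biUnion (fun z _ => G.adj_finite hp z))) hsub

lemma ball_subset_closedBall (x : Γ) (r : ℝ) : G.ball x r ⊆ {y | G.dist x y ≤ ⌈r⌉₊} := by
  intro y hy
  simp only [ball, Set.mem_setOf_eq] at hy ⊢
  have : (G.dist x y : ℝ) < (⌈r⌉₊ : ℝ) + 1 := lt_of_lt_of_le hy (le_trans (Nat.le_ceil r) (by linarith [Nat.le_ceil r]))
  exact_mod_cast Nat.lt_succ_iff.1 (by exact_mod_cast this)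

lemma ball_finite (hp : G.p0cond) (x : Γ) (r : ℝ) : (G.ball x r).Finite :=
  Set.Finite.subset (G.closedBall_finite hp x ⌈r⌉₊) (G.ball_subset_closedBall x r)

lemma exists_dist_ge (hp : G.p0cond) (x : Γ) (k : ℕ) : ∃ y, k ≤ G.dist x y := by
  haveI := G.inf
  have hfin := G.closedBall_finite hp x k
  obtain ⟨y, hy⟩ := hfin.infinite_compl.nonempty
  simp only [Set.mem_compl_iff, Set.mem_setOf_eq, not_le] at hy
  exact ⟨y, hy.le⟩

lemma exists_dist_eq (hp : G.p0cond) (x : Γ) (k : ℕ) : ∃ z, G.dist x z = k := by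
  obtain ⟨y, hy⟩ := G.exists_dist_ge hp x k
  have hxy := G.dist_adjN x y
  set m := G.dist x y with hm
  rw [show m = k + (m - k) by omega] at hxy
  obtain ⟨z, hz1, hz2⟩ := (G.adjN_add k (m-k) x y).1 hxy
  refine ⟨z, le_antisymm (G.dist_le hz1) ?_⟩
  have h1 : G.dist x y ≤ G.dist x z + G.dist z y := G.dist_triangle x z y
  have h2 : G.dist z y ≤ m - k := G.dist_le hz2
  omega

lemma setVol_eq_sum {A : Set Γ} (hA : A.Finite) :
    G.setVol A = ∑ y ∈ hA.toFinset, G.vtx y := by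
  rw [setVol, tsum_subtype A G.vtx, tsum_eq_sum (s := hA.toFinset)]
  · exact Finset.sum_congr rfl (fun y hy => Set.indicator_of_mem (hA.mem_toFinset.1 hy) _)
  · intro y hy
    exact Set.indicator_of_notMem (fun h => hy (hA.mem_toFinset.2 h)) _

lemma setVol_nonneg_fin {A : Set Γ} (hA : A.Finite) : 0 ≤ G.setVol A := by
  rw [G.setVol_eq_sum hA]
  exact Finset.sum_nonneg (fun y _ => G.vtx_nonneg y)

lemma setVol_mono {A B : Set Γ} (hB : B.Finite) (hAB : A ⊆ B) :
    G.setVol A ≤ G.setVol B := by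
  have hA := hB.subset hAB
  rw [G.setVol_eq_sum hA, G.setVol_eq_sum hB]
  refine Finset.sum_le_sum_of_subset_of_nonneg ?_ (fun y _ _ => G.vtx_nonneg y)
  intro y hy
  exact hB.mem_toFinset.2 (hAB (hA.mem_toFinset.1 hy))

lemma vtx_le_setVol {A : Set Γ} (hA : A.Finite) {x : Γ} (hx : x ∈ A) :
    G.vtx x ≤ G.setVol A := by
  rw [G.setVol_eq_sum hA]
  exact Finset.single_le_sum (fun y _ => G.vtx_nonneg y) (hA.mem_toFinset.2 hx)

lemma mem_ball_self {x : Γ} {r : ℝ} (hr : 0 < r) : x ∈ G.ball x r := by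
  simp [ball, G.dist_self, hr]

lemma ball_mono (x : Γ) {r r' : ℝ} (h : r ≤ r') : G.ball x r ⊆ G.ball x r' :=
  fun y hy => lt_of_lt_of_le hy h

lemma vol_mono (hp : G.p0cond) (x : Γ) {r r' : ℝ} (h : r ≤ r') :
    G.vol x r ≤ G.vol x r' :=
  G.setVol_mono (G.ball_finite hp x r') (G.ball_mono x h)

lemma vol_pos (hp : G.p0cond) (x : Γ) {r : ℝ} (hr : 0 < r) : 0 < G.vol x r :=
  lt_of_lt_of_le (G.vtx_pos hp x)
    (G.vtx_le_setVol (G.ball_finite hp x r) (G.mem_ball_self hr))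

lemma vol_nonneg (hp : G.p0cond) (x : Γ) (r : ℝ) : 0 ≤ G.vol x r :=
  G.setVol_nonneg_fin (G.ball_finite hp x r)

/-- ball of other center: B(x,r) ⊆ B(y, r + dist y x). -/
lemma ball_subset_ball' (x y : Γ) (r : ℝ) :
    G.ball x r ⊆ G.ball y (r + (G.dist y x : ℝ)) := by
  intro z hz
  simp only [ball, Set.mem_setOf_eq] at hz ⊢
  have h := G.dist_triangle y x z
  have : (G.dist y z : ℝ) ≤ (G.dist y x : ℝ) + (G.dist x z : ℝ) := by exact_mod_cast h
  linarith

/-- reverse doubling: V(x,4s) ≥ τ V(x,2s) where τ = (1 - D⁻³)⁻¹. -/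
lemma rev_doubling (hp : G.p0cond) {D : ℝ} (hD : 2 < D)
    (hVD : ∀ (x : Γ) (R : ℝ), 0 < R → G.vol x (2*R) ≤ D * G.vol x R)
    (x : Γ) (s : ℕ) (hs : 0 < s) :
    G.vol x (2*(s:ℝ)) ≤ (1 - D⁻¹^3) * G.vol x (4*(s:ℝ)) := by
  obtain ⟨z, hz⟩ := G.exists_dist_eq hp x (3*s)
  have hD0 : (0:ℝ) < D := by linarith
  have hs0 : (0:ℝ) < (s:ℝ) := by exact_mod_cast hs
  -- B(z,s) ⊆ B(x,4s), disjoint from B(x,2s)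
  have hsub1 : G.ball z (s:ℝ) ⊆ G.ball x (4*(s:ℝ)) := by
    intro y hy
    simp only [ball, Set.mem_setOf_eq] at hy ⊢
    have h := G.dist_triangle x z y
    have : (G.dist x y : ℝ) ≤ (G.dist x z : ℝ) + (G.dist z y : ℝ) := by exact_mod_cast h
    rw [hz] at this
    push_cast at this
    linarith
  have hdisj : Disjoint (G.ball x (2*(s:ℝ))) (G.ball z (s:ℝ)) := by
    rw [Set.disjoint_left]
    intro y hy1 hy2
    simp only [ball, Set.mem_setOf_eq] at hy1 hy2
    have h := G.dist_triangle x y z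
    rw [hz] at h
    have h' : (3*(s:ℝ)) ≤ (G.dist x y : ℝ) + (G.dist y z : ℝ) := by exact_mod_cast h
    rw [G.dist_symm y z] at h'
    linarith
  -- additivity
  have hfin4 := G.ball_finite hp x (4*(s:ℝ))
  have hfin2 := G.ball_finite hp x (2*(s:ℝ))
  have hfinz := G.ball_finite hp z (s:ℝ)
  have hunion : G.setVol (G.ball x (2*(s:ℝ))) + G.setVol (G.ball z (s:ℝ))
      ≤ G.vol x (4*(s:ℝ)) := by
    have hU : (G.ball x (2*(s:ℝ)) ∪ G.ball z (s:ℝ)) ⊆ G.ball x (4*(s:ℝ)) := by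
      refine Set.union_subset ?_ hsub1
      exact G.ball_mono x (by linarith)
    have hUfin := hfin4.subset hU
    have h1 : G.setVol (G.ball x (2*(s:ℝ)) ∪ G.ball z (s:ℝ))
        = G.setVol (G.ball x (2*(s:ℝ))) + G.setVol (G.ball z (s:ℝ)) := by
      rw [G.setVol_eq_sum hUfin, G.setVol_eq_sum hfin2, G.setVol_eq_sum hfinz,
        ← Finset.sum_union]
      · congr 1
        ext y
        simp [Set.Finite.mem_toFinset]
      · rw [Finset.disjoint_left]
        intro y hy1 hy2
        exact Set.disjoint_left.1 hdisj (hfin2.mem_toFinset.1 hy1) (hfinz.mem_toFinset.1 hy2)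
    calc G.setVol (G.ball x (2*(s:ℝ))) + G.setVol (G.ball z (s:ℝ))
        = G.setVol (G.ball x (2*(s:ℝ)) ∪ G.ball z (s:ℝ)) := h1.symm
      _ ≤ G.vol x (4*(s:ℝ)) := G.setVol_mono hfin4 hU
  -- V(z,s) ≥ D⁻³ V(x,4s)
  have hz8 : G.ball x (4*(s:ℝ)) ⊆ G.ball z (8*(s:ℝ)) := by
    intro y hy
    simp only [ball, Set.mem_setOf_eq] at hy ⊢
    have h := G.dist_triangle z x y
    have h' : (G.dist z y : ℝ) ≤ (G.dist z x : ℝ) + (G.dist x y : ℝ) := by exact_mod_cast h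
    rw [G.dist_symm z x, hz] at h'
    push_cast at h'
    linarith
  have hVz : G.vol x (4*(s:ℝ)) ≤ D^3 * G.vol z (s:ℝ) := by
    have h8 : G.vol z (8*(s:ℝ)) ≤ D^3 * G.vol z (s:ℝ) := by
      have e1 : G.vol z (8*(s:ℝ)) ≤ D * G.vol z (4*(s:ℝ)) := by
        have := hVD z (4*(s:ℝ)) (by linarith)
        rw [show (2:ℝ)*(4*(s:ℝ)) = 8*(s:ℝ) by ring] at this
        exact this
      have e2 : G.vol z (4*(s:ℝ)) ≤ D * G.vol z (2*(s:ℝ)) := by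
        have := hVD z (2*(s:ℝ)) (by linarith)
        rw [show (2:ℝ)*(2*(s:ℝ)) = 4*(s:ℝ) by ring] at this
        exact this
      have e3 : G.vol z (2*(s:ℝ)) ≤ D * G.vol z (s:ℝ) := by
        have := hVD z (s:ℝ) hs0
        exact this
      calc G.vol z (8*(s:ℝ)) ≤ D * G.vol z (4*(s:ℝ)) := e1
        _ ≤ D * (D * G.vol z (2*(s:ℝ))) := mul_le_mul_of_nonneg_left e2 hD0.le
        _ ≤ D * (D * (D * G.vol z (s:ℝ))) := mul_le_mul_of_nonneg_left (mul_le_mul_of_nonneg_left e3 hD0.le) hD0.le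
        _ = D^3 * G.vol z (s:ℝ) := by ring
    exact le_trans (G.setVol_mono (G.ball_finite hp z (8*(s:ℝ))) hz8) h8
  -- combine
  have hD3 : (0:ℝ) < D^3 := by positivity
  have key : G.vol x (2*(s:ℝ)) + D⁻¹^3 * G.vol x (4*(s:ℝ)) ≤ G.vol x (4*(s:ℝ)) := by
    have h1 : D⁻¹^3 * G.vol x (4*(s:ℝ)) ≤ G.setVol (G.ball z (s:ℝ)) := by
      rw [inv_pow]
      rw [inv_mul_le_iff₀ hD3]
      exact hVz
    have := hunion
    rw [show G.setVol (G.ball x (2*(s:ℝ))) = G.vol x (2*(s:ℝ)) from rfl] at this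
    linarith
  linarith


lemma transP_zero (x y : Γ) : G.transP 0 x y = if x = y then 1 else 0 := by
  simp [transP, killedP]

lemma transP_succ (n : ℕ) (x y : Γ) :
    G.transP (n+1) x y = ∑' z, G.kerP x z * G.transP n z y := by
  simp [transP, killedP]

lemma kerP_nonneg (x y : Γ) : 0 ≤ G.kerP x y :=
  div_nonneg (G.w_nonneg x y) (G.vtx_nonneg x)

lemma kerP_eq_zero_of_not_adj {x y : Γ} (h : ¬ G.adj x y) : G.kerP x y = 0 := by
  rw [kerP, G.w_zero x y h, zero_div]

lemma adj_of_kerP_ne_zero {x y : Γ} (h : G.kerP x y ≠ 0) : G.adj x y := by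
  by_contra hadj
  exact h (G.kerP_eq_zero_of_not_adj hadj)

lemma transP_nonneg (n : ℕ) (x y : Γ) : 0 ≤ G.transP n x y := by
  induction n generalizing x with
  | zero => rw [transP_zero]; positivity
  | succ n ih =>
      rw [transP_succ]
      exact tsum_nonneg (fun z => mul_nonneg (G.kerP_nonneg x z) (ih z))

lemma transP_vanish {n : ℕ} {x y : Γ} (h : n < G.dist x y) : G.transP n x y = 0 := by
  induction n generalizing x with
  | zero =>
      rw [transP_zero, if_neg]
      intro he
      rw [he, G.dist_self] at h
      omega
  | succ n ih =>
      rw [transP_succ]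
      have : ∀ z, G.kerP x z * G.transP n z y = 0 := by
        intro z
        by_cases hz : G.kerP x z = 0
        · rw [hz, zero_mul]
        · have hadj := G.adj_of_kerP_ne_zero hz
          have h1 : G.dist x y ≤ G.dist x z + G.dist z y := G.dist_triangle x z y
          have h2 : G.dist x z ≤ 1 := G.dist_adj hadj
          have h3 : n < G.dist z y := by omega
          rw [ih h3, mul_zero]
      rw [tsum_congr this, tsum_zero]

/-- finite closed ball as a Finset. -/
def cB (hp : G.p0cond) (x : Γ) (n : ℕ) : Finset Γ :=
  (G.closedBall_finite hp x n).toFinset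

lemma mem_cB {hp : G.p0cond} {x y : Γ} {n : ℕ} :
    y ∈ G.cB hp x n ↔ G.dist x y ≤ n := by
  simp [cB, Set.Finite.mem_toFinset]

lemma transP_supp (hp : G.p0cond) {n : ℕ} {x y : Γ} (h : y ∉ G.cB hp x n) :
    G.transP n x y = 0 := by
  rw [G.mem_cB, not_le] at h
  exact G.transP_vanish h

lemma transP_one (x y : Γ) : G.transP 1 x y = G.kerP x y := by
  rw [transP_succ]
  rw [tsum_eq_single y]
  · rw [transP_zero, if_pos rfl, mul_one]
  · intro b hb
    rw [transP_zero, if_neg hb, mul_zero]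

lemma kerP_supp (hp : G.p0cond) {x z : Γ} (h : z ∉ G.cB hp x 1) : G.kerP x z = 0 := by
  refine G.kerP_eq_zero_of_not_adj (fun hadj => ?_)
  exact h (G.mem_cB.2 (G.dist_adj hadj))

lemma transP_add (hp : G.p0cond) (m n : ℕ) (x y : Γ) :
    G.transP (m+n) x y = ∑' z, G.transP m x z * G.transP n z y := by
  induction m generalizing x with
  | zero =>
      rw [Nat.zero_add, tsum_eq_single x]
      · rw [transP_zero, if_pos rfl, one_mul]
      · intro b hb
        rw [transP_zero, if_neg (fun h => hb h.symm), zero_mul]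
  | succ m ih =>
      have hidx : m + 1 + n = (m + n) + 1 := by omega
      rw [hidx, transP_succ]
      have h1 : ∀ z, G.kerP x z * G.transP (m+n) z y
          = G.kerP x z * ∑' w, G.transP m z w * G.transP n w y := by
        intro z; rw [ih]
      rw [tsum_congr h1]
      set s := G.cB hp x 1 with hs
      set t := G.cB hp x (m+1) with ht
      rw [tsum_eq_sum (s := s) (by
        intro z hz
        rw [G.kerP_supp hp hz, zero_mul])]
      have h2 : ∀ z ∈ s, G.kerP x z * ∑' w, G.transP m z w * G.transP n w y
          = ∑ w ∈ t, G.kerP x z * (G.transP m z w * G.transP n w y) := by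
        intro z hz
        rw [tsum_eq_sum (s := t) (by
          intro w hw
          have hzw : G.dist z w > m := by
            rw [G.mem_cB, not_le] at hw
            have h3 := G.dist_triangle x z w
            have h4 : G.dist x z ≤ 1 := G.mem_cB.1 hz
            omega
          rw [G.transP_vanish hzw, zero_mul]), Finset.mul_sum]
      rw [Finset.sum_congr rfl h2, Finset.sum_comm]
      have h5 : ∀ w ∈ t, ∑ z ∈ s, G.kerP x z * (G.transP m z w * G.transP n w y)
          = G.transP (m+1) x w * G.transP n w y := by
        intro w _
        have : ∑ z ∈ s, G.kerP x z * (G.transP m z w * G.transP n w y)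
            = (∑ z ∈ s, G.kerP x z * G.transP m z w) * G.transP n w y := by
          rw [Finset.sum_mul]
          exact Finset.sum_congr rfl (fun z _ => by ring)
        rw [this, transP_succ, tsum_eq_sum (s := s) (by
          intro z hz
          rw [G.kerP_supp hp hz, zero_mul])]
      rw [Finset.sum_congr rfl h5]
      rw [← tsum_eq_sum (L := SummationFilter.unconditional Γ) (s := t) (by
        intro w hw
        rw [G.mem_cB, not_le] at hw
        rw [G.transP_vanish (by omega : m + 1 < G.dist x w), zero_mul])]

lemma vtx_mul_transP (hp : G.p0cond) (n : ℕ) (x y : Γ) :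
    G.vtx x * G.transP n x y = G.vtx y * G.transP n y x := by
  induction n generalizing x y with
  | zero =>
      rw [transP_zero, transP_zero]
      by_cases h : x = y
      · simp [h]
      · rw [if_neg h, if_neg (fun h2 => h h2.symm), mul_zero, mul_zero]
  | succ n ih =>
      rw [transP_succ, ← tsum_mul_left]
      rw [show n + 1 = n + 1 from rfl]
      have hr : G.transP (n+1) y x = ∑' z, G.transP n y z * G.kerP z x := by
        have := G.transP_add hp n 1 y x
        rw [show n + 1 = n + 1 from rfl] at this
        rw [this]
        exact tsum_congr (fun z => by rw [transP_one])
      rw [hr, ← tsum_mul_left]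
      refine tsum_congr (fun z => ?_)
      have hvx : G.vtx x ≠ 0 := (G.vtx_pos hp x).ne'
      have hvz : G.vtx z ≠ 0 := (G.vtx_pos hp z).ne'
      have e1 : G.vtx x * (G.kerP x z * G.transP n z y) = G.w x z * G.transP n z y := by
        rw [kerP]; field_simp
      have e2 : G.w x z * G.transP n z y = G.kerP z x * (G.vtx z * G.transP n z y) := by
        rw [kerP, G.w_symm x z]; field_simp
      rw [e1, e2, ih z y]
      ring

lemma dform_nonneg (f : Γ → ℝ) : 0 ≤ G.dform f := by
  rw [dform]
  have : 0 ≤ ∑' p : Γ × Γ, G.w p.1 p.2 * (f p.1 - f p.2)^2 :=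
    tsum_nonneg (fun p => mul_nonneg (G.w_nonneg _ _) (sq_nonneg _))
  linarith

lemma hk_nonneg (n : ℕ) (x y : Γ) : 0 ≤ G.hk n x y :=
  div_nonneg (G.transP_nonneg n x y) (G.vtx_nonneg y)

lemma hk_vanish (hp : G.p0cond) {n : ℕ} {x y : Γ} (h : n < G.dist x y) : G.hk n x y = 0 := by
  rw [hk, G.transP_vanish h, zero_div]

lemma hk_two_sum (hp : G.p0cond) (n : ℕ) (z w : Γ) (T : Finset Γ)
    (hT : ∀ y, G.dist z y ≤ n → y ∈ T) :
    G.hk (2*n) z w = ∑ y ∈ T, G.hk n z y * G.hk n w y * G.vtx y := by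
  have h2 : 2*n = n + n := by omega
  rw [hk, h2, G.transP_add hp n n z w]
  rw [show (∑' y, G.transP n z y * G.transP n y w) / G.vtx w
      = ∑' y, G.transP n z y * G.transP n y w / G.vtx w by
    rw [tsum_div_const]]
  rw [tsum_eq_sum (s := T) (by
    intro y hy
    have : n < G.dist z y := by
      by_contra hc
      exact hy (hT y (by omega))
    rw [G.transP_vanish this, zero_mul, zero_div])]
  refine Finset.sum_congr rfl (fun y _ => ?_)
  have hvy : G.vtx y ≠ 0 := (G.vtx_pos hp y).ne'
  have hvw : G.vtx w ≠ 0 := (G.vtx_pos hp w).ne'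
  have hsym := G.vtx_mul_transP hp n y w
  rw [hk, hk]
  field_simp
  linear_combination G.transP n z y * hsym

lemma hk_pair_le (hp : G.p0cond) (n : ℕ) (z w : Γ) :
    G.hk (2*n) z w ≤ (1/2) * G.hk (2*n) z z + (1/2) * G.hk (2*n) w w := by
  set T := G.cB hp z n ∪ G.cB hp w n with hTdef
  have hTz : ∀ y, G.dist z y ≤ n → y ∈ T :=
    fun y hy => Finset.mem_union_left _ (G.mem_cB.2 hy)
  have hTw : ∀ y, G.dist w y ≤ n → y ∈ T :=
    fun y hy => Finset.mem_union_right _ (G.mem_cB.2 hy)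
  rw [G.hk_two_sum hp n z w T hTz, G.hk_two_sum hp n z z T hTz,
    G.hk_two_sum hp n w w T hTw]
  rw [Finset.mul_sum, Finset.mul_sum, ← Finset.sum_add_distrib]
  refine Finset.sum_le_sum (fun y _ => ?_)
  have h1 := G.hk_nonneg n z y
  have h2 := G.hk_nonneg n w y
  have h3 := G.vtx_nonneg y
  nlinarith [sq_nonneg (G.hk n z y - G.hk n w y)]


lemma mem_ball_nat {x z : Γ} {R : ℕ} : z ∈ G.ball x (R:ℝ) ↔ G.dist x z < R := by
  simp only [ball, Set.mem_setOf_eq, Nat.cast_lt]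

lemma weighted_CS (T : Finset Γ) (a b v : Γ → ℝ) (hv : ∀ y, 0 ≤ v y) :
    (∑ y ∈ T, a y * b y * v y)^2 ≤ (∑ y ∈ T, (a y)^2 * v y) * (∑ y ∈ T, (b y)^2 * v y) :=
  Finset.sum_sq_le_sum_mul_sum_of_sq_eq_mul T
    (fun i _ => mul_nonneg (sq_nonneg _) (hv i))
    (fun i _ => mul_nonneg (sq_nonneg _) (hv i))
    (fun i _ => by ring)

lemma key_estimate (hp : G.p0cond) (x : Γ) (R : ℕ) (hR : 0 < R)
    (f : Γ → ℝ) (hf0 : ∀ y, 0 ≤ f y)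
    (hsupp : ∀ y, y ∉ G.ball x (R:ℝ) → f y = 0)
    (n : ℕ) (hn : 0 < n) (M₀ : ℝ)
    (hdiag : ∀ y, y ∈ G.ball x (R:ℝ) → G.hk (2*n) y y ≤ M₀)
    (hMvol : M₀ * G.vol x (R:ℝ) ≤ 1/2) :
    (∑ z ∈ (G.ball_finite hp x (R:ℝ)).toFinset, (f z)^2 * G.vtx z) ≤ 4 * n * G.dform f := by
  classical
  set Bs := (G.ball_finite hp x (R:ℝ)).toFinset with hBsdef
  have hBs_mem : ∀ z, z ∈ Bs ↔ G.dist x z < R := by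
    intro z
    rw [hBsdef, Set.Finite.mem_toFinset]
    exact G.mem_ball_nat
  have hfz : ∀ z, z ∉ Bs → f z = 0 := by
    intro z hz
    refine hsupp z (fun h => hz ?_)
    rw [hBs_mem]
    exact G.mem_ball_nat.1 h
  set S := ∑ z ∈ Bs, (f z)^2 * G.vtx z with hSdef
  set Q : ℕ → ℝ := fun k => ∑ z ∈ Bs, ∑ w ∈ Bs, f z * G.vtx z * G.transP k z w * f w
    with hQdef
  set u : ℕ → Γ → ℝ := fun a y => ∑' z, G.transP a y z * f z with hudef
  -- u as a finite sum
  have hu_sum : ∀ (a : ℕ) (y : Γ), u a y = ∑ z ∈ Bs, G.transP a y z * f z := by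
    intro a y
    rw [hudef]
    exact tsum_eq_sum (fun z hz => by rw [hfz z hz, mul_zero])
  -- u vanishes far away
  have hu_supp : ∀ (a : ℕ) (y : Γ), R + a ≤ G.dist x y → u a y = 0 := by
    intro a y hy
    rw [hu_sum]
    refine Finset.sum_eq_zero (fun z hz => ?_)
    have h1 : G.dist x z < R := (hBs_mem z).1 hz
    have h2 : G.dist x y ≤ G.dist x z + G.dist z y := G.dist_triangle x z y
    have h3 : G.dist y z = G.dist z y := G.dist_symm y z
    have h4 : a < G.dist y z := by omega
    rw [G.transP_vanish h4, zero_mul]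
  -- Q as a weighted inner product of u's
  have huQ : ∀ (a b : ℕ) (T : Finset Γ), G.cB hp x (R+a+b) ⊆ T →
      Q (a+b) = ∑ y ∈ T, u a y * u b y * G.vtx y := by
    intro a b T hT
    have hTout : ∀ y, y ∉ T → R + a + b < G.dist x y := by
      intro y hy
      by_contra hc
      exact hy (hT (G.mem_cB.2 (by omega)))
    symm
    calc ∑ y ∈ T, u a y * u b y * G.vtx y
        = ∑ y ∈ T, ∑ z ∈ Bs, ∑ w ∈ Bs,
            (G.transP a y z * f z) * ((G.transP b y w * f w) * G.vtx y) := by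
          refine Finset.sum_congr rfl (fun y _ => ?_)
          rw [hu_sum a y, hu_sum b y, Finset.sum_mul_sum, Finset.sum_mul]
          refine Finset.sum_congr rfl (fun z _ => ?_)
          rw [Finset.sum_mul]
          exact Finset.sum_congr rfl (fun w _ => by ring)
      _ = ∑ z ∈ Bs, ∑ w ∈ Bs, ∑ y ∈ T,
            (G.transP a y z * f z) * ((G.transP b y w * f w) * G.vtx y) := by
          rw [Finset.sum_comm]
          exact Finset.sum_congr rfl (fun z _ => Finset.sum_comm)
      _ = ∑ z ∈ Bs, ∑ w ∈ Bs, f z * G.vtx z * G.transP (a+b) z w * f w := by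
          refine Finset.sum_congr rfl (fun z hz => Finset.sum_congr rfl (fun w _ => ?_))
          have hstep : ∀ y, (G.transP a y z * f z) * ((G.transP b y w * f w) * G.vtx y)
              = (f z * f w) * ((G.vtx y * G.transP a y z) * G.transP b y w) := by
            intro y; ring
          rw [Finset.sum_congr rfl (fun y _ => hstep y)]
          rw [← Finset.mul_sum]
          have hstep2 : ∀ y, (G.vtx y * G.transP a y z) * G.transP b y w
              = G.vtx z * (G.transP a z y * G.transP b y w) := by
            intro y
            rw [G.vtx_mul_transP hp a y z]
            ring
          rw [Finset.sum_congr rfl (fun y _ => hstep2 y), ← Finset.mul_sum]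
          have hzR : G.dist x z < R := (hBs_mem z).1 hz
          have hsum_eq : ∑ y ∈ T, G.transP a z y * G.transP b y w
              = G.transP (a+b) z w := by
            rw [G.transP_add hp a b z w]
            symm
            refine tsum_eq_sum (fun y hy => ?_)
            have h1 := hTout y hy
            have h2 : G.dist x y ≤ G.dist x z + G.dist z y := G.dist_triangle x z y
            have h3 : a < G.dist z y := by omega
            rw [G.transP_vanish h3, zero_mul]
          rw [hsum_eq]
          ring
      _ = Q (a+b) := rfl
  -- Q 0 = S
  have hQ0 : Q 0 = S := by
    rw [hQdef, hSdef]
    refine Finset.sum_congr rfl (fun z hz => ?_)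
    rw [Finset.sum_eq_single_of_mem z hz]
    · rw [transP_zero, if_pos rfl]; ring
    · intro w _ hw
      rw [transP_zero, if_neg (fun h => hw h.symm), mul_zero, zero_mul]
  -- Cauchy-Schwarz for Q
  have hQCS : ∀ a b : ℕ, Q (a+b) ^ 2 ≤ Q (a+a) * Q (b+b) := by
    intro a b
    set T := G.cB hp x (R + (a+b) + (a+b)) with hTdef
    have hsub : ∀ c d : ℕ, c + d ≤ (a+b) + (a+b) → G.cB hp x (R+c+d) ⊆ T := by
      intro c d hcd y hy
      rw [G.mem_cB] at hy ⊢
      omega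
    rw [huQ a b T (hsub a b (by omega)), huQ a a T (hsub a a (by omega)),
      huQ b b T (hsub b b (by omega))]
    have h1 : ∀ y, u a y * u a y * G.vtx y = (u a y)^2 * G.vtx y := fun y => by ring
    have h2 : ∀ y, u b y * u b y * G.vtx y = (u b y)^2 * G.vtx y := fun y => by ring
    rw [Finset.sum_congr rfl (fun y _ => h1 y), Finset.sum_congr rfl (fun y _ => h2 y)]
    exact weighted_CS T (u a) (u b) G.vtx (fun y => G.vtx_nonneg y)
  -- Q 1 = S - dform f
  have hQ1 : Q 1 = S - G.dform f := by
    set B' := G.cB hp x R with hB'def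
    have hBsB' : Bs ⊆ B' := by
      intro z hz
      rw [G.mem_cB]
      exact le_of_lt ((hBs_mem z).1 hz)
    have hdf : G.dform f = (1/2) * ∑ p ∈ B' ×ˢ B', G.w p.1 p.2 * (f p.1 - f p.2)^2 := by
      rw [dform]
      congr 1
      refine tsum_eq_sum (fun p hpmem => ?_)
      rw [Finset.mem_product, not_and_or] at hpmem
      by_cases hadj : G.adj p.1 p.2
      · have hkey : f p.1 = 0 ∧ f p.2 = 0 := by
          rcases hpmem with h | h
          · rw [G.mem_cB, not_le] at h
            constructor
            · refine hfz p.1 (fun hmem => ?_)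
              have := (hBs_mem p.1).1 hmem
              omega
            · refine hfz p.2 (fun hmem => ?_)
              have h1 := (hBs_mem p.2).1 hmem
              have h2 := G.dist_triangle x p.2 p.1
              have h3 := G.dist_adj (G.adj_symm _ _ hadj)
              omega
          · rw [G.mem_cB, not_le] at h
            constructor
            · refine hfz p.1 (fun hmem => ?_)
              have h1 := (hBs_mem p.1).1 hmem
              have h2 := G.dist_triangle x p.1 p.2
              have h3 := G.dist_adj hadj
              omega
            · refine hfz p.2 (fun hmem => ?_)
              have := (hBs_mem p.2).1 hmem
              omega
        rw [hkey.1, hkey.2]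
        ring
      · rw [G.w_zero _ _ hadj, zero_mul]
    rw [hdf, Finset.sum_product]
    -- expand the square
    have hexp : ∑ a ∈ B', ∑ b ∈ B', G.w a b * (f a - f b)^2
        = (∑ a ∈ B', ∑ b ∈ B', G.w a b * (f a)^2)
          + (∑ a ∈ B', ∑ b ∈ B', G.w a b * (f b)^2)
          - 2 * (∑ a ∈ B', ∑ b ∈ B', G.w a b * (f a * f b)) := by
      calc ∑ a ∈ B', ∑ b ∈ B', G.w a b * (f a - f b)^2
          = ∑ a ∈ B', ∑ b ∈ B',
              (G.w a b * (f a)^2 + G.w a b * (f b)^2 - 2 * (G.w a b * (f a * f b))) :=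
            Finset.sum_congr rfl (fun a _ => Finset.sum_congr rfl (fun b _ => by ring))
        _ = _ := by
            simp only [Finset.sum_add_distrib, Finset.sum_sub_distrib, Finset.mul_sum]
    have hswap : ∑ a ∈ B', ∑ b ∈ B', G.w a b * (f b)^2
        = ∑ a ∈ B', ∑ b ∈ B', G.w a b * (f a)^2 := by
      rw [Finset.sum_comm]
      exact Finset.sum_congr rfl (fun a _ =>
        Finset.sum_congr rfl (fun b _ => by rw [G.w_symm]))
    have hdiagS : ∑ a ∈ B', ∑ b ∈ B', G.w a b * (f a)^2 = S := by
      have h1 : ∀ a_1 ∈ B', ∑ b ∈ B', G.w a_1 b * (f a_1)^2 = (f a_1)^2 * G.vtx a_1 := by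
        intro a ha
        by_cases hfa : f a = 0
        · rw [hfa]
          simp
        · have haB : a ∈ Bs := by
            by_contra hc
            exact hfa (hfz a hc)
          have hvtx : G.vtx a = ∑ b ∈ B', G.w a b := by
            rw [vtx]
            refine tsum_eq_sum (fun b hb => ?_)
            by_cases hadj : G.adj a b
            · exfalso
              refine hb ?_
              rw [G.mem_cB]
              have h2 := G.dist_triangle x a b
              have h3 := G.dist_adj hadj
              have h4 := (hBs_mem a).1 haB
              omega
            · exact G.w_zero _ _ hadj
          rw [hvtx, Finset.mul_sum]
          exact Finset.sum_congr rfl (fun b _ => by ring)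
      rw [Finset.sum_congr rfl h1, hSdef]
      symm
      refine Finset.sum_subset hBsB' (fun z _ hz => ?_)
      rw [hfz z hz]
      ring
    have hcross : ∑ a ∈ B', ∑ b ∈ B', G.w a b * (f a * f b) = Q 1 := by
      have h1 : ∀ z ∈ Bs, ∀ w ∈ Bs, f z * G.vtx z * G.transP 1 z w * f w
          = G.w z w * (f z * f w) := by
        intro z _ w _
        rw [G.transP_one, kerP]
        have : G.vtx z ≠ 0 := (G.vtx_pos hp z).ne'
        field_simp
      have h2 : ∑ z ∈ Bs, ∑ w ∈ Bs, f z * G.vtx z * G.transP 1 z w * f w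
          = ∑ z ∈ Bs, ∑ w ∈ Bs, G.w z w * (f z * f w) :=
        Finset.sum_congr rfl (fun z hz => Finset.sum_congr rfl (fun w hw => h1 z hz w hw))
      have h3 : ∀ z, ∑ w ∈ Bs, G.w z w * (f z * f w) = ∑ w ∈ B', G.w z w * (f z * f w) :=
        fun z => Finset.sum_subset hBsB' (fun w _ hw => by rw [hfz w hw]; ring)
      have h4 : ∑ z ∈ Bs, ∑ w ∈ B', G.w z w * (f z * f w)
          = ∑ z ∈ B', ∑ w ∈ B', G.w z w * (f z * f w) :=
        Finset.sum_subset hBsB'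
          (fun z _ hz => Finset.sum_eq_zero (fun w _ => by rw [hfz z hz]; ring))
      symm
      calc Q 1 = ∑ z ∈ Bs, ∑ w ∈ Bs, f z * G.vtx z * G.transP 1 z w * f w := rfl
        _ = ∑ z ∈ Bs, ∑ w ∈ Bs, G.w z w * (f z * f w) := h2
        _ = ∑ z ∈ Bs, ∑ w ∈ B', G.w z w * (f z * f w) :=
            Finset.sum_congr rfl (fun z _ => h3 z)
        _ = ∑ z ∈ B', ∑ w ∈ B', G.w z w * (f z * f w) := h4
        _ = ∑ a ∈ B', ∑ b ∈ B', G.w a b * (f a * f b) := rfl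
    rw [hexp, hswap, hdiagS, hcross]
    ring
  -- upper bound for Q (2n)
  have hQn_ub : Q (2*n) ≤ S * (1/2) := by
    have hterm : ∀ z ∈ Bs, ∀ w ∈ Bs, f z * G.vtx z * G.transP (2*n) z w * f w
        ≤ M₀ * ((f z * G.vtx z) * (f w * G.vtx w)) := by
      intro z hz w hw
      have hhk : G.hk (2*n) z w ≤ M₀ := by
        have h1 := G.hk_pair_le hp n z w
        have h2 := hdiag z (by rw [G.mem_ball_nat]; exact (hBs_mem z).1 hz)
        have h3 := hdiag w (by rw [G.mem_ball_nat]; exact (hBs_mem w).1 hw)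
        linarith
      have hvw : G.vtx w ≠ 0 := (G.vtx_pos hp w).ne'
      have htr : G.transP (2*n) z w = G.hk (2*n) z w * G.vtx w := by
        rw [hk, div_mul_cancel₀ _ hvw]
      rw [htr]
      have hnn : 0 ≤ f z * G.vtx z * G.vtx w * f w := by
        have := hf0 z; have := hf0 w
        have := G.vtx_nonneg z; have := G.vtx_nonneg w
        positivity
      calc f z * G.vtx z * (G.hk (2*n) z w * G.vtx w) * f w
          = G.hk (2*n) z w * (f z * G.vtx z * G.vtx w * f w) := by ring
        _ ≤ M₀ * (f z * G.vtx z * G.vtx w * f w) := by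
            refine mul_le_mul_of_nonneg_right hhk hnn
        _ = M₀ * ((f z * G.vtx z) * (f w * G.vtx w)) := by ring
    have h1 : Q (2*n) ≤ M₀ * (∑ z ∈ Bs, f z * G.vtx z)^2 := by
      rw [hQdef]
      calc ∑ z ∈ Bs, ∑ w ∈ Bs, f z * G.vtx z * G.transP (2*n) z w * f w
          ≤ ∑ z ∈ Bs, ∑ w ∈ Bs, M₀ * ((f z * G.vtx z) * (f w * G.vtx w)) :=
            Finset.sum_le_sum (fun z hz => Finset.sum_le_sum (fun w hw => hterm z hz w hw))
        _ = M₀ * (∑ z ∈ Bs, f z * G.vtx z)^2 := by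
            rw [sq, Finset.sum_mul_sum, Finset.mul_sum]
            refine Finset.sum_congr rfl (fun z _ => ?_)
            rw [Finset.mul_sum]
    have h2 : (∑ z ∈ Bs, f z * G.vtx z)^2 ≤ S * G.vol x (R:ℝ) := by
      have hvolsum : G.vol x (R:ℝ) = ∑ z ∈ Bs, G.vtx z := G.setVol_eq_sum _
      rw [hvolsum, hSdef]
      refine Finset.sum_sq_le_sum_mul_sum_of_sq_eq_mul Bs
        (fun i _ => mul_nonneg (sq_nonneg _) (G.vtx_nonneg i))
        (fun i _ => G.vtx_nonneg i)
        (fun i _ => by ring)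
    have hM0 : 0 ≤ M₀ := le_trans (G.hk_nonneg (2*n) x x)
      (hdiag x (G.mem_ball_self (by exact_mod_cast hR)))
    calc Q (2*n) ≤ M₀ * (∑ z ∈ Bs, f z * G.vtx z)^2 := h1
      _ ≤ M₀ * (S * G.vol x (R:ℝ)) := mul_le_mul_of_nonneg_left h2 hM0
      _ = S * (M₀ * G.vol x (R:ℝ)) := by ring
      _ ≤ S * (1/2) := by
          refine mul_le_mul_of_nonneg_left hMvol ?_
          rw [hSdef]
          exact Finset.sum_nonneg (fun z _ => mul_nonneg (sq_nonneg _) (G.vtx_nonneg z))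
  -- now the iteration
  have hS_nonneg : 0 ≤ S :=
    Finset.sum_nonneg (fun z _ => mul_nonneg (sq_nonneg _) (G.vtx_nonneg z))
  by_cases hS0 : S = 0
  · rw [hS0]
    have := G.dform_nonneg f
    positivity
  have hS : 0 < S := lt_of_le_of_ne hS_nonneg (fun h => hS0 h.symm)
  by_contra hcon
  push_neg at hcon
  have hn' : (0:ℝ) < (n:ℝ) := by exact_mod_cast hn
  set ρ := G.dform f / S with hρdef
  have hρ_nonneg : 0 ≤ ρ := div_nonneg (G.dform_nonneg f) hS_nonneg
  have hρlt : ρ < 1/(4*(n:ℝ)) := by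
    rw [hρdef, div_lt_div_iff₀ hS (by positivity)]
    nlinarith [hcon]
  set a := 1 - ρ with hadef
  have ha_pos : 0 < a := by
    have hn1 : (1:ℝ) ≤ (n:ℝ) := by exact_mod_cast hn
    have : 1/(4*(n:ℝ)) ≤ 1 := by
      rw [div_le_one (by positivity)]
      nlinarith
    have h4 : ρ < 1 := lt_of_lt_of_le hρlt this
    rw [hadef]; linarith
  have hQ1a : Q 1 = a * S := by
    rw [hQ1, hadef, hρdef]
    field_simp
  have hstep : ∀ k : ℕ, 0 < Q (2*k) ∧ a^2 * Q (2*k) ≤ Q (2*(k+1)) := by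
    intro k
    induction k with
    | zero =>
        have e0 : 2*0 = 0+0 := by omega
        have e1 : 2*(0+1) = 1+1 := by omega
        have e2 : (0:ℕ)+1 = 0+1 := rfl
        constructor
        · rw [show 2*0 = 0 by omega, hQ0]; exact hS
        · have hCS := hQCS 0 1
          rw [show (0:ℕ)+0 = 0 by omega, hQ0] at hCS
          rw [show (0:ℕ)+1 = 1 by omega, hQ1a] at hCS
          rw [show 2*0 = 0 by omega, hQ0, show 2*(0+1) = 1+1 by omega]
          have h2 : (a^2 * S) * S ≤ Q (1+1) * S := by nlinarith
          exact (mul_le_mul_iff_of_pos_right hS).1 h2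
    | succ k ih =>
        obtain ⟨hpos, hih⟩ := ih
        have hpos2 : 0 < Q (2*(k+1)) := by
          have h1 : 0 < a^2 * Q (2*k) := by positivity
          linarith
        constructor
        · exact hpos2
        · have hCS := hQCS k (k+2)
          have e1 : k + (k+2) = 2*(k+1) := by omega
          have e2 : k + k = 2*k := by omega
          have e3 : (k+2) + (k+2) = 2*(k+1+1) := by omega
          rw [e1, e2, e3] at hCS
          have h3 : (a^2 * Q (2*(k+1))) * Q (2*k) ≤ Q (2*(k+1+1)) * Q (2*k) := by
            nlinarith
          exact (mul_le_mul_iff_of_pos_right hpos).1 h3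
  have hgeo : ∀ k : ℕ, a^(2*k) * S ≤ Q (2*k) := by
    intro k
    induction k with
    | zero => rw [show 2*0 = 0 by omega]; rw [hQ0]; simp
    | succ k ih =>
        have e1 : 2*(k+1) = 2*k + 2 := by omega
        have h1 : a^(2*(k+1)) * S = a^2 * (a^(2*k) * S) := by
          rw [e1, pow_add]; ring
        rw [h1]
        calc a^2 * (a^(2*k) * S) ≤ a^2 * Q (2*k) :=
              mul_le_mul_of_nonneg_left ih (sq_nonneg a)
          _ ≤ Q (2*(k+1)) := (hstep k).2
  have hfin : a^(2*n) ≤ 1/2 := by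
    have h1 := hgeo n
    have h2 : a^(2*n) * S ≤ (1/2) * S := by
      calc a^(2*n) * S ≤ Q (2*n) := h1
        _ ≤ S * (1/2) := hQn_ub
        _ = (1/2) * S := by ring
    exact (mul_le_mul_iff_of_pos_right hS).1 h2
  have hbern : 1 + (2*(n:ℝ)) * (-ρ) ≤ a^(2*n) := by
    have h := one_add_mul_le_pow (a := -ρ) (by linarith : (-2:ℝ) ≤ -ρ) (2*n)
    rw [hadef]
    have e : 1 + -ρ = 1 - ρ := by ring
    rw [e] at h
    have hc : ((2*n:ℕ):ℝ) = 2*(n:ℝ) := by push_cast; ring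
    rw [hc] at h
    linarith
  have : ρ ≥ 1/(4*(n:ℝ)) := by
    have h1 : 1 - 2*(n:ℝ)*ρ ≤ 1/2 := by
      have := hbern.trans hfin
      linarith
    rw [ge_iff_le, div_le_iff₀ (by positivity)]
    linarith
  linarith

lemma vol_growth (hp : G.p0cond) {D : ℝ} (hD : 2 < D)
    (hVD' : ∀ (x : Γ) (r : ℝ), 0 < r → G.vol x (2*r) ≤ D * G.vol x r)
    (x : Γ) (R : ℕ) (hR : 0 < R) (J : ℕ) :
    ((1 - D⁻¹^3)⁻¹)^J * G.vol x (2*(R:ℝ)) ≤ G.vol x ((2:ℝ)^(J+1)*(R:ℝ)) := by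
  have hD0 : (0:ℝ) < D := by linarith
  have hd0 : 0 < 1 - D⁻¹^3 := by
    have h1 : D⁻¹ < 1 := inv_lt_one_of_one_lt₀ (by linarith)
    have h2 : (0:ℝ) ≤ D⁻¹ := inv_nonneg.2 hD0.le
    have h3 : D⁻¹^3 < 1 := pow_lt_one₀ h2 h1 (by norm_num)
    linarith
  induction J with
  | zero => simp
  | succ J ih =>
      have hs : 0 < 2^J*R := by positivity
      have hrd := G.rev_doubling hp hD hVD' x (2^J*R) hs
      have hcast : ((2^J*R : ℕ):ℝ) = 2^J * (R:ℝ) := by push_cast; ring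
      rw [hcast] at hrd
      have hτ : (0:ℝ) < (1 - D⁻¹^3)⁻¹ := by positivity
      have step : (1-D⁻¹^3)⁻¹ * G.vol x (2*(2^J*(R:ℝ))) ≤ G.vol x (4*(2^J*(R:ℝ))) := by
        rw [inv_mul_le_iff₀ hd0]
        exact hrd
      calc ((1-D⁻¹^3)⁻¹)^(J+1) * G.vol x (2*(R:ℝ))
          = (1-D⁻¹^3)⁻¹ * (((1-D⁻¹^3)⁻¹)^J * G.vol x (2*(R:ℝ))) := by ring
        _ ≤ (1-D⁻¹^3)⁻¹ * G.vol x ((2:ℝ)^(J+1)*(R:ℝ)) :=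
            mul_le_mul_of_nonneg_left ih hτ.le
        _ = (1-D⁻¹^3)⁻¹ * G.vol x (2*(2^J*(R:ℝ))) := by
            rw [show (2:ℝ)^(J+1)*(R:ℝ) = 2*(2^J*(R:ℝ)) by ring]
        _ ≤ G.vol x (4*(2^J*(R:ℝ))) := step
        _ = G.vol x ((2:ℝ)^(J+1+1)*(R:ℝ)) := by
            rw [show (4:ℝ)*(2^J*(R:ℝ)) = 2^(J+1+1)*(R:ℝ) by ring]

lemma dform_eq_sum (hp : G.p0cond) (x : Γ) (R : ℕ) (f : Γ → ℝ)
    (hsupp : ∀ y, y ∉ G.ball x (R:ℝ) → f y = 0) :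
    G.dform f = (1/2) * ∑ p ∈ (G.cB hp x R) ×ˢ (G.cB hp x R),
      G.w p.1 p.2 * (f p.1 - f p.2)^2 := by
  have hfz : ∀ z, ¬ G.dist x z < R → f z = 0 := by
    intro z hz
    exact hsupp z (fun h => hz (G.mem_ball_nat.1 h))
  rw [dform]
  congr 1
  refine tsum_eq_sum (fun p hpmem => ?_)
  rw [Finset.mem_product, not_and_or] at hpmem
  by_cases hadj : G.adj p.1 p.2
  · have hkey : f p.1 = 0 ∧ f p.2 = 0 := by
      rcases hpmem with h | h
      · rw [G.mem_cB, not_le] at h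
        refine ⟨hfz p.1 (by omega), hfz p.2 (fun hmem => ?_)⟩
        have h2 := G.dist_triangle x p.2 p.1
        have h3 := G.dist_adj (G.adj_symm _ _ hadj)
        omega
      · rw [G.mem_cB, not_le] at h
        refine ⟨hfz p.1 (fun hmem => ?_), hfz p.2 (by omega)⟩
        have h2 := G.dist_triangle x p.1 p.2
        have h3 := G.dist_adj hadj
        omega
    rw [hkey.1, hkey.2]
    ring
  · rw [G.w_zero _ _ hadj, zero_mul]

lemma dform_abs_le (hp : G.p0cond) (x : Γ) (R : ℕ) (f : Γ → ℝ)
    (hsupp : ∀ y, y ∉ G.ball x (R:ℝ) → f y = 0) :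
    G.dform (fun y => |f y|) ≤ G.dform f := by
  have habs_supp : ∀ y, y ∉ G.ball x (R:ℝ) → |f y| = 0 := by
    intro y hy; rw [hsupp y hy, abs_zero]
  rw [G.dform_eq_sum hp x R f hsupp, G.dform_eq_sum hp x R _ habs_supp]
  have h : ∀ p : Γ × Γ, G.w p.1 p.2 * (|f p.1| - |f p.2|)^2
      ≤ G.w p.1 p.2 * (f p.1 - f p.2)^2 := by
    intro p
    refine mul_le_mul_of_nonneg_left ?_ (G.w_nonneg _ _)
    have h1 := abs_sub_abs_le_abs_sub (f p.1) (f p.2)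
    have h2 := abs_sub_abs_le_abs_sub (f p.2) (f p.1)
    rw [abs_sub_comm] at h2
    have h3 : -|f p.1 - f p.2| ≤ |f p.1| - |f p.2| := by linarith
    calc (|f p.1| - |f p.2|)^2 ≤ |f p.1 - f p.2|^2 := sq_le_sq' h3 h1
      _ = (f p.1 - f p.2)^2 := sq_abs _
  have := Finset.sum_le_sum (fun p (_ : p ∈ (G.cB hp x R) ×ˢ (G.cB hp x R)) => h p)
  linarith

lemma tsum_sq_eq (hp : G.p0cond) (x : Γ) (R : ℕ) (f : Γ → ℝ)
    (hsupp : ∀ y, y ∉ G.ball x (R:ℝ) → f y = 0) :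
    ∑' y, (f y)^2 * G.vtx y
      = ∑ z ∈ (G.ball_finite hp x (R:ℝ)).toFinset, (f z)^2 * G.vtx z := by
  refine tsum_eq_sum (fun z hz => ?_)
  rw [Set.Finite.mem_toFinset] at hz
  rw [hsupp z hz]
  ring

lemma F_mono {F : Γ → ℕ → ℝ} (hmono : ∀ (x : Γ) (R : ℕ), F x R + 1 ≤ F x (R+1))
    (y : Γ) {a b : ℕ} (h : a ≤ b) : F y a ≤ F y b := by
  induction b with
  | zero => rw [Nat.le_zero.1 h]
  | succ b ih =>
      by_cases hab : a ≤ b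
      · exact le_trans (ih hab) (by linarith [hmono y b])
      · rw [show a = b + 1 by omega]

lemma F_gap {F : Γ → ℕ → ℝ} (hmono : ∀ (x : Γ) (R : ℕ), F x R + 1 ≤ F x (R+1))
    (y : Γ) {a b : ℕ} (h : a < b) : F y a + 1 ≤ F y b :=
  le_trans (hmono y a) (F_mono hmono y h)

lemma invF_lb {F : Γ → ℕ → ℝ} (hmono : ∀ (x : Γ) (R : ℕ), F x R + 1 ≤ F x (R+1))
    {c₀ : ℝ} (hc₀ : 0 < c₀) (hlow : ∀ (x : Γ) (R : ℕ), c₀ * (R:ℝ)^2 ≤ F x R)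
    (y : Γ) (L n : ℕ) (hn : 0 < n) (hFL : F y L ≤ (n:ℝ)) :
    L ≤ invF' F y (2*n) := by
  have hne : {R : ℕ | ((2*n:ℕ):ℝ) ≤ F y R}.Nonempty := by
    obtain ⟨k, hk⟩ := exists_nat_ge ((2*(n:ℝ))/c₀)
    refine ⟨max k 1, ?_⟩
    simp only [Set.mem_setOf_eq]
    have h1 : (max k 1 : ℝ) = ((max k 1 : ℕ):ℝ) := by norm_num
    have h2 : ((k:ℝ)) ≤ ((max k 1 : ℕ):ℝ) := by exact_mod_cast le_max_left k 1
    have h3 : (1:ℝ) ≤ ((max k 1 : ℕ):ℝ) := by exact_mod_cast le_max_right k 1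
    have h4 := hlow y (max k 1)
    have ht0 : (0:ℝ) ≤ ((max k 1 : ℕ):ℝ) := by linarith
    have h5 : c₀ * ((max k 1 : ℕ):ℝ) ≤ c₀ * ((max k 1 : ℕ):ℝ)^2 := by
      nlinarith [mul_le_mul_of_nonneg_left h3 ht0]
    have h6 : (2*(n:ℝ)) ≤ c₀ * (k:ℝ) := by
      rw [div_le_iff₀ hc₀] at hk
      linarith [hk]
    have h7 : c₀ * (k:ℝ) ≤ c₀ * ((max k 1 : ℕ):ℝ) := mul_le_mul_of_nonneg_left h2 hc₀.le
    have h8 : ((2*n:ℕ):ℝ) = 2*(n:ℝ) := by push_cast; ring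
    rw [h8]
    linarith
  have hmem := Nat.sInf_mem hne
  set m := sInf {R : ℕ | ((2*n:ℕ):ℝ) ≤ F y R} with hm
  by_contra hc
  push_neg at hc
  have hlt : m < L := hc
  have h1 : F y m + 1 ≤ F y L := F_gap hmono y hlt
  have h2 : ((2*n:ℕ):ℝ) ≤ F y m := hmem
  have h3 : (1:ℝ) ≤ (n:ℝ) := by exact_mod_cast hn
  push_cast at h2
  have : invF' F y (2*n) = m := rfl
  nlinarith


end WGraph


set_option maxHeartbeats 1000000

/-- under (p0) and (VD), if F ∈ W₀ and DUE(F) holds, then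
λ(x,R) ≥ c/F(x,R). -/
theorem statement13 {Γ : Type*} (G : WGraph Γ) (hp0 : G.p0cond) (hVD : G.VD)
    (F : Γ → ℕ → ℝ) (hF : G.memW0 F) (hDUE : G.DUE F) :
    ∃ c > (0:ℝ), ∀ (x : Γ) (R : ℕ), 0 < R →
      c / F x R ≤ G.lam (G.ball x (R:ℝ)) := by
  obtain ⟨⟨β, hβ, β', hβ', cF, hcF, CF, hCF, hregs⟩, ⟨c₀, hc₀, hlow⟩, hmono⟩ := hF
  obtain ⟨C, hC, hdue⟩ := hDUE
  obtain ⟨D₀, hD₀, hVD₀⟩ := hVD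
  set D := D₀ + 2 with hDdef
  have hD : 2 < D := by rw [hDdef]; linarith
  have hD0 : (0:ℝ) < D := by linarith
  have hVD' : ∀ (x : Γ) (r : ℝ), 0 < r → G.vol x (2*r) ≤ D * G.vol x r := by
    intro x r hr
    have h1 := hVD₀ x r hr
    have h2 := G.vol_nonneg hp0 x r
    nlinarith
  set τ := (1 - D⁻¹^3)⁻¹ with hτdef
  have hdpos : 0 < 1 - D⁻¹^3 := by
    have h2 : (0:ℝ) ≤ D⁻¹ := inv_nonneg.2 hD0.le
    have h1 : D⁻¹ < 1 := inv_lt_one_of_one_lt₀ (by linarith)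
    have h3 : D⁻¹^3 < 1 := pow_lt_one₀ h2 h1 (by norm_num)
    linarith
  have hτ1 : 1 < τ := by
    rw [hτdef]
    have h4 : 0 < D⁻¹^3 := by positivity
    have h5 : 1 - D⁻¹^3 < 1 := by linarith
    exact (one_lt_inv₀ hdpos).2 h5
  set C₁ := C + 1 with hC₁def
  have hC₁ : 1 ≤ C₁ := by rw [hC₁def]; linarith
  have hC₁0 : 0 < C₁ := by linarith
  obtain ⟨J, hJ⟩ := pow_unbounded_of_one_lt (2*C₁) hτ1
  set M := 2^(J+1) + 1 with hMdef
  have h2p : 1 ≤ 2^(J+1) := Nat.one_le_two_pow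
  have hM2 : 2 ≤ M := by omega
  set K₁ := CF * (M:ℝ)^β with hK₁def
  have hMR0 : (0:ℝ) < (M:ℝ) := by exact_mod_cast (by omega : 0 < M)
  have hK₁pos : 0 < K₁ := mul_pos hCF (Real.rpow_pos_of_pos hMR0 β)
  set K₂ := K₁ + 1/c₀ with hK₂def
  have hK₂pos : 0 < K₂ := by positivity
  refine ⟨1/(4*K₂), by positivity, ?_⟩
  intro x R hR
  have hR1 : (1:ℝ) ≤ (R:ℝ) := by exact_mod_cast hR
  have hFx : 0 < F x R :=
    lt_of_lt_of_le (mul_pos hc₀ (pow_pos (by linarith : (0:ℝ) < (R:ℝ)) 2)) (hlow x R)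
  rw [WGraph.lam]
  refine le_csInf ⟨_, ⟨(fun y => if y = x then 1 else 0), ?_, ?_, rfl⟩⟩ ?_
  · intro h
    have := congrFun h x
    simp at this
  · intro y hy
    have hx : x ∈ G.ball x (R:ℝ) := G.mem_ball_self (by exact_mod_cast hR)
    by_cases hyx : y = x
    · rw [hyx] at hy; exact absurd hx hy
    · simp [hyx]
  · rintro e ⟨f, hf_ne, hf_supp, rfl⟩
    set g := fun y => |f y| with hgdef
    have hg_supp : ∀ y, y ∉ G.ball x (R:ℝ) → g y = 0 := by
      intro y hy
      rw [hgdef]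
      simp [hf_supp y hy]
    have hg0 : ∀ y, 0 ≤ g y := fun y => abs_nonneg _
    set Bs := (G.ball_finite hp0 x (R:ℝ)).toFinset with hBsdef
    have hSfg : ∑' y, (f y)^2 * G.vtx y = ∑ z ∈ Bs, (g z)^2 * G.vtx z := by
      rw [G.tsum_sq_eq hp0 x R f hf_supp]
      exact Finset.sum_congr rfl (fun z _ => by rw [hgdef]; simp [sq_abs])
    have hSpos : 0 < ∑ z ∈ Bs, (g z)^2 * G.vtx z := by
      obtain ⟨y₀, hy₀⟩ : ∃ y, f y ≠ 0 := by
        by_contra hcc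
        push_neg at hcc
        exact hf_ne (funext hcc)
      have hy₀b : y₀ ∈ Bs := by
        rw [hBsdef, Set.Finite.mem_toFinset]
        by_contra hcc
        exact hy₀ (hf_supp y₀ hcc)
      have hgy₀ : g y₀ ≠ 0 := by rw [hgdef]; simpa using hy₀
      have hterm : 0 < (g y₀)^2 * G.vtx y₀ := by
        have h1 := G.vtx_pos hp0 y₀
        positivity
      refine lt_of_lt_of_le hterm ?_
      refine Finset.single_le_sum (f := fun z => (g z)^2 * G.vtx z) (fun z _ => ?_) hy₀b
      have := G.vtx_nonneg z
      positivity
    set n := ⌈K₁ * F x R⌉₊ with hndef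
    have hn : 0 < n := Nat.ceil_pos.2 (by positivity)
    have hnK1 : K₁ * F x R ≤ (n:ℝ) := Nat.le_ceil _
    have hnK2 : (n:ℝ) ≤ K₂ * F x R := by
      have h1 : (n:ℝ) < K₁ * F x R + 1 := Nat.ceil_lt_add_one (by positivity)
      have hR2 : (1:ℝ) ≤ (R:ℝ)^2 := by nlinarith
      have h2 : c₀ ≤ F x R := by
        have := mul_le_mul_of_nonneg_left hR2 hc₀.le
        have h2b := hlow x R
        linarith
      have h3 : (1:ℝ) ≤ (1/c₀) * F x R := by
        rw [one_div, inv_mul_eq_div, le_div_iff₀ hc₀]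
        linarith
      have h4 : K₂ * F x R = K₁ * F x R + (1/c₀) * F x R := by rw [hK₂def]; ring
      calc (n:ℝ) ≤ K₁ * F x R + 1 := h1.le
        _ ≤ K₁ * F x R + (1/c₀) * F x R := by linarith
        _ = K₂ * F x R := h4.symm
    set M₀ := 1/(2*G.vol x (R:ℝ)) with hM₀def
    have hvolpos : 0 < G.vol x (R:ℝ) := G.vol_pos hp0 x (by exact_mod_cast hR)
    have hdiag : ∀ y, y ∈ G.ball x (R:ℝ) → G.hk (2*n) y y ≤ M₀ := by
      intro y hyb
      have hdxy : G.dist x y < R := G.mem_ball_nat.1 hyb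
      have hMR : R < M*R := by
        have := (Nat.mul_lt_mul_right hR).2 (show 1 < M by omega)
        omega
      have hdyx : G.dist y x < M*R := by
        rw [G.dist_symm y x]
        omega
      have hregs' := hregs y x (M*R) R hR hMR hdyx
      have hdivM : ((M*R:ℕ):ℝ)/(R:ℝ) = (M:ℝ) := by
        push_cast
        field_simp
      have hFyMR : F y (M*R) ≤ K₁ * F x R := by
        have h1 := hregs'.2
        rw [hdivM] at h1
        rw [div_le_iff₀ hFx] at h1
        calc F y (M*R) ≤ CF * (M:ℝ)^β * F x R := h1
          _ = K₁ * F x R := by rw [hK₁def]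
      have hFyn : F y (M*R) ≤ (n:ℝ) := le_trans hFyMR hnK1
      have hinv : M*R ≤ WGraph.invF' F y (2*n) :=
        WGraph.invF_lb hmono hc₀ hlow y (M*R) n hn hFyn
      have hvol1 : G.vol y ((M*R:ℕ):ℝ) ≤ G.vol y ((WGraph.invF' F y (2*n) : ℕ):ℝ) :=
        G.vol_mono hp0 y (by exact_mod_cast hinv)
      have hballincl : G.ball x ((2:ℝ)^(J+1)*(R:ℝ)) ⊆ G.ball y ((M*R:ℕ):ℝ) := by
        intro z hz
        simp only [WGraph.ball, Set.mem_setOf_eq] at hz ⊢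
        have h1 := G.dist_triangle y x z
        have h2 : (G.dist y z:ℝ) ≤ (G.dist y x:ℝ) + (G.dist x z:ℝ) := by exact_mod_cast h1
        have h3 : (G.dist y x : ℝ) < R := by
          rw [G.dist_symm y x]
          exact_mod_cast hdxy
        have h4 : ((M*R:ℕ):ℝ) = (2:ℝ)^(J+1)*(R:ℝ) + (R:ℝ) := by
          rw [hMdef]
          push_cast
          ring
        rw [h4]
        linarith
      have hvol2 : G.vol x ((2:ℝ)^(J+1)*(R:ℝ)) ≤ G.vol y ((M*R:ℕ):ℝ) :=
        G.setVol_mono (G.ball_finite hp0 y _) hballincl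
      have hvol3 := G.vol_growth hp0 hD hVD' x R hR J
      have hvol4 : G.vol x (R:ℝ) ≤ G.vol x (2*(R:ℝ)) := G.vol_mono hp0 x (by linarith)
      have hτpos : (0:ℝ) < τ := by linarith
      have hvchain : 2*C₁*G.vol x (R:ℝ) ≤ G.vol y ((WGraph.invF' F y (2*n) : ℕ):ℝ) := by
        have h5 : τ^J * G.vol x (R:ℝ) ≤ τ^J * G.vol x (2*(R:ℝ)) :=
          mul_le_mul_of_nonneg_left hvol4 (by positivity)
        have h6 : 2*C₁*G.vol x (R:ℝ) ≤ τ^J * G.vol x (R:ℝ) :=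
          mul_le_mul_of_nonneg_right hJ.le hvolpos.le
        linarith [hvol3, hvol1, hvol2, h5, h6]
      have hdueY := hdue y (2*n) (by omega)
      have hApos : 0 < G.vol y ((WGraph.invF' F y (2*n):ℕ):ℝ) :=
        lt_of_lt_of_le (by positivity) hvchain
      calc G.hk (2*n) y y ≤ C / G.vol y ((WGraph.invF' F y (2*n):ℕ):ℝ) := hdueY
        _ ≤ C₁ / (2*C₁*G.vol x (R:ℝ)) := by
            apply div_le_div₀ (by linarith) (by linarith) (by positivity) hvchain
        _ = M₀ := by
            have hV0 : G.vol x (R:ℝ) ≠ 0 := hvolpos.ne'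
            have hC₁ne : C₁ ≠ 0 := hC₁0.ne'
            rw [hM₀def]
            field_simp
    have hMvol : M₀ * G.vol x (R:ℝ) ≤ 1/2 := by
      have hV0 : G.vol x (R:ℝ) ≠ 0 := hvolpos.ne'
      rw [hM₀def]
      rw [show 1/(2*G.vol x (R:ℝ)) * G.vol x (R:ℝ) = 1/2 by field_simp]
    have hkey := G.key_estimate hp0 x R hR g hg0 hg_supp n hn M₀ hdiag hMvol
    have hdg : G.dform g ≤ G.dform f := G.dform_abs_le hp0 x R f hf_supp
    rw [hSfg]
    set Sg := ∑ z ∈ Bs, (g z)^2 * G.vtx z with hSgdef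
    have h4n : (0:ℝ) < 4*(n:ℝ) := by
      have : (0:ℝ) < (n:ℝ) := by exact_mod_cast hn
      linarith
    have hdfS : Sg ≤ G.dform f * (4*(n:ℝ)) := by
      have h1 : 4*(n:ℝ)*G.dform g ≤ 4*(n:ℝ)*G.dform f :=
        mul_le_mul_of_nonneg_left hdg h4n.le
      calc Sg ≤ 4*(n:ℝ)*G.dform g := by
            have := hkey
            linarith [hkey]
        _ ≤ 4*(n:ℝ)*G.dform f := h1
        _ = G.dform f * (4*(n:ℝ)) := by ring
    have hstep1 : 1/(4*K₂) / F x R = 1/(4*K₂*F x R) := by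
      rw [div_div]
    have hstep2 : 1/(4*K₂*F x R) ≤ 1/(4*(n:ℝ)) := by
      apply one_div_le_one_div_of_le h4n
      nlinarith [hnK2]
    have hstep3 : 1/(4*(n:ℝ)) ≤ G.dform f / Sg := by
      rw [div_le_div_iff₀ h4n hSpos]
      linarith [hdfS]
    calc 1/(4*K₂) / F x R = 1/(4*K₂*F x R) := hstep1
      _ ≤ 1/(4*(n:ℝ)) := hstep2
      _ ≤ G.dform f / Sg := hstep3
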